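/- Let F be a continuous CDF, n ≥ 2, and α_1, ..., α_n > 0. If X_{α_1},...,X_{α_n} are independent random variables with X_{α_i} having CDF F^{α_i}, then P(X_{α_1} > max(X_{α_2},...,X_{α_n})) = α_1/(α_1+...+α_n). -/

import Mathlib

open MeasureTheory ProbabilityTheory Set Filter Topology Real
open scoped ENNReal



lemma aux_rpow_cont {p : ℝ} (hp : 0 ≤ p) : Continuous fun x : ℝ => x ^ p :=
  continuous_iff_continuousAt.2 fun x => Real.continuousAt_rpow_const x p (Or.inr hp)

lemma aux_cdf_tendsto_atTop {μ : Measure ℝ} [IsProbabilityMeasure μ] {H : ℝ → ℝ}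
    (hH : ∀ t, μ (Iic t) = ENNReal.ofReal (H t)) (h0 : ∀ t, 0 ≤ H t) :
    Tendsto H atTop (𝓝 1) := by
  have h1 : Tendsto (fun t => μ (Iic t)) atTop (𝓝 1) := by
    simpa using tendsto_measure_Iic_atTop μ
  have h2 : Tendsto (fun t => (μ (Iic t)).toReal) atTop (𝓝 ((1 : ℝ≥0∞)).toReal) :=
    (ENNReal.tendsto_toReal ENNReal.one_ne_top).comp h1
  simpa using h2.congr fun t => by rw [hH, ENNReal.toReal_ofReal (h0 t)]

lemma aux_cdf_tendsto_atBot {μ : Measure ℝ} [IsProbabilityMeasure μ] {H : ℝ → ℝ}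
    (hH : ∀ t, μ (Iic t) = ENNReal.ofReal (H t)) (h0 : ∀ t, 0 ≤ H t) :
    Tendsto H atBot (𝓝 0) := by
  have h1 : Tendsto (fun t : ℝ => μ (Iic t)) atBot (𝓝 (μ (⋂ t : ℝ, Iic t))) := by
    have := MeasureTheory.tendsto_measure_iInter_atBot (μ := μ) (s := fun t : ℝ => Iic t)
      (fun t => measurableSet_Iic.nullMeasurableSet) (fun a b hab => Iic_subset_Iic.2 hab)
      ⟨0, measure_ne_top _ _⟩
    exact this
  have hset : (⋂ t : ℝ, Iic t) = (∅ : Set ℝ) := by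
    ext x; simp only [mem_iInter, mem_Iic, mem_empty_iff_false, iff_false, not_forall, not_le]
    exact ⟨x - 1, by linarith⟩
  rw [hset, measure_empty] at h1
  have h2 : Tendsto (fun t => (μ (Iic t)).toReal) atBot (𝓝 ((0 : ℝ≥0∞)).toReal) :=
    (ENNReal.tendsto_toReal (by simp)).comp h1
  simpa using h2.congr fun t => by rw [hH, ENNReal.toReal_ofReal (h0 t)]

lemma aux_cdf_mono {μ : Measure ℝ} {H : ℝ → ℝ}
    (hH : ∀ t, μ (Iic t) = ENNReal.ofReal (H t)) (h0 : ∀ t, 0 ≤ H t) : Monotone H := by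
  intro a b hab
  have : ENNReal.ofReal (H a) ≤ ENNReal.ofReal (H b) := by
    rw [← hH, ← hH]; exact measure_mono (Iic_subset_Iic.2 hab)
  exact (ENNReal.ofReal_le_ofReal_iff (h0 b)).1 this

lemma aux_cdf_le_one {μ : Measure ℝ} [IsProbabilityMeasure μ] {H : ℝ → ℝ}
    (hH : ∀ t, μ (Iic t) = ENNReal.ofReal (H t)) (h0 : ∀ t, 0 ≤ H t) : ∀ t, H t ≤ 1 := by
  intro t
  have : ENNReal.ofReal (H t) ≤ 1 := by rw [← hH]; exact prob_le_one
  rwa [ENNReal.ofReal_le_one] at this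

/-- measure of sublevel sets of a continuous CDF -/
lemma aux_sublevel {μ : Measure ℝ} [IsProbabilityMeasure μ] {H : ℝ → ℝ}
    (hH : ∀ t, μ (Iic t) = ENNReal.ofReal (H t)) (hc : Continuous H) (h0 : ∀ t, 0 ≤ H t) :
    ∀ s : ℝ, μ {x | H x ≤ s} = ENNReal.ofReal (min s 1) := by
  intro s
  have hmono := aux_cdf_mono hH h0
  rcases le_or_gt 1 s with hs1 | hs1
  · have hset : {x | H x ≤ s} = univ := eq_univ_of_forall fun x =>
      le_trans (aux_cdf_le_one hH h0 x) hs1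
    rw [hset, min_eq_right hs1]
    simp
  rw [min_eq_left hs1.le]
  rcases lt_or_ge s 0 with hs0 | hs0
  · have hset : {x | H x ≤ s} = (∅ : Set ℝ) := by
      ext x; simp only [mem_setOf_eq, mem_empty_iff_false, iff_false, not_le]
      exact lt_of_lt_of_le hs0 (h0 x)
    rw [hset, measure_empty, ENNReal.ofReal_of_nonpos hs0.le]
  -- main case 0 ≤ s < 1
  have htop := aux_cdf_tendsto_atTop hH h0
  have hbot := aux_cdf_tendsto_atBot hH h0
  set A : Set ℝ := {x | H x ≤ s} with hA
  have hAclosed : IsClosed A := isClosed_le hc continuous_const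
  have hbdd : BddAbove A := by
    obtain ⟨t0, ht0⟩ := (htop.eventually (eventually_gt_nhds hs1)).exists
    refine ⟨t0, fun x hx => ?_⟩
    by_contra h
    push_neg at h
    exact absurd (hmono h.le) (by simp only [not_le]; exact lt_of_le_of_lt hx ht0)
  rcases A.eq_empty_or_nonempty with hAe | hAne
  · rw [hAe, measure_empty]
    rcases eq_or_lt_of_le hs0 with h | h
    · rw [← h]; simp
    · obtain ⟨t1, ht1⟩ := (hbot.eventually (eventually_lt_nhds h)).exists
      exact absurd (show t1 ∈ A from ht1.le) (by rw [hAe]; exact notMem_empty _)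
  set b := sSup A with hb
  have hbA : b ∈ A := hAclosed.csSup_mem hAne hbdd
  have hHb_le : H b ≤ s := hbA
  have hHb_ge : s ≤ H b := by
    by_contra h
    push_neg at h
    obtain ⟨x, hxb, hxs⟩ := ((hc.continuousAt (x := b)).eventually
      (eventually_lt_nhds h)).exists_gt
    exact absurd (le_csSup hbdd (show x ∈ A from hxs.le)) (not_le.2 hxb)
  have hAIic : A = Iic b := by
    ext x
    constructor
    · exact fun hx => le_csSup hbdd hx
    · exact fun hx => le_trans (hmono hx) hHb_le
  rw [hAIic, hH, le_antisymm hHb_le hHb_ge]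
lemma aux_map_uniform {μ : Measure ℝ} [IsProbabilityMeasure μ] {H : ℝ → ℝ} (hH : ∀ t, μ (Iic t) = ENNReal.ofReal (H t)) (hc : Continuous H)
    (h0 : ∀ t, 0 ≤ H t) :
    Measure.map H μ = volume.restrict (Icc (0:ℝ) 1) := by
  have : IsProbabilityMeasure (Measure.map H μ) :=
    Measure.isProbabilityMeasure_map hc.measurable.aemeasurable
  refine MeasureTheory.Measure.ext_of_Iic (Measure.map H μ) _ fun s => ?_
  rw [Measure.map_apply hc.measurable measurableSet_Iic]
  have hpre : H ⁻¹' Iic s = {x | H x ≤ s} := rfl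
  rw [hpre, aux_sublevel hH hc h0 s, Measure.restrict_apply measurableSet_Iic]
  rcases lt_or_ge s 0 with hs0 | hs0
  · have : Iic s ∩ Icc (0:ℝ) 1 = ∅ := by
      ext x; simp only [mem_inter_iff, mem_Iic, mem_Icc, mem_empty_iff_false, iff_false]
      rintro ⟨h1, h2, _⟩; linarith
    rw [this, measure_empty, ENNReal.ofReal_of_nonpos (by simp [min_le_iff]; left; linarith)]
  rcases le_or_gt s 1 with hs1 | hs1
  · have : Iic s ∩ Icc (0:ℝ) 1 = Icc 0 s := by
      ext x; simp only [mem_inter_iff, mem_Iic, mem_Icc]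
      constructor
      · rintro ⟨h1, h2, _⟩; exact ⟨h2, h1⟩
      · rintro ⟨h1, h2⟩; exact ⟨h2, h1, le_trans h2 hs1⟩
    rw [this, Real.volume_Icc, min_eq_left hs1, sub_zero]
  · have : Iic s ∩ Icc (0:ℝ) 1 = Icc 0 1 := by
      ext x; simp only [mem_inter_iff, mem_Iic, mem_Icc]
      constructor
      · rintro ⟨h1, h2, h3⟩; exact ⟨h2, h3⟩
      · rintro ⟨h1, h2⟩; exact ⟨by linarith, h1, h2⟩
    rw [this, Real.volume_Icc, min_eq_right hs1.le, sub_zero]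

lemma aux_lintegral_pow {μ : Measure ℝ} [IsProbabilityMeasure μ] {H : ℝ → ℝ} (hH : ∀ t, μ (Iic t) = ENNReal.ofReal (H t)) (hc : Continuous H)
    (h0 : ∀ t, 0 ≤ H t) {γ : ℝ} (hγ : 0 < γ) :
    ∫⁻ x, ENNReal.ofReal (H x ^ γ) ∂μ = ENNReal.ofReal (1 / (γ + 1)) := by
  have hmg : Measurable fun u : ℝ => ENNReal.ofReal (u ^ γ) :=
    ENNReal.measurable_ofReal.comp (aux_rpow_cont hγ.le).measurable
  calc ∫⁻ x, ENNReal.ofReal (H x ^ γ) ∂μ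
      = ∫⁻ u, ENNReal.ofReal (u ^ γ) ∂(Measure.map H μ) :=
        (lintegral_map hmg hc.measurable).symm
    _ = ∫⁻ u in Icc (0:ℝ) 1, ENNReal.ofReal (u ^ γ) := by
        rw [aux_map_uniform hH hc h0]
    _ = ENNReal.ofReal (∫ u in Icc (0:ℝ) 1, u ^ γ) := by
        rw [← ofReal_integral_eq_lintegral_ofReal]
        · exact ((aux_rpow_cont hγ.le).continuousOn.integrableOn_Icc)
        · exact (ae_restrict_iff' measurableSet_Icc).2 (ae_of_all _ fun x hx =>
            Real.rpow_nonneg hx.1 γ)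
    _ = ENNReal.ofReal (1 / (γ + 1)) := by
        rw [MeasureTheory.integral_Icc_eq_integral_Ioc,
          ← intervalIntegral.integral_of_le (zero_le_one),
          integral_rpow (Or.inl (by linarith)), Real.one_rpow,
          Real.zero_rpow (by positivity)]
        norm_num



lemma aux_Iio {μ : Measure ℝ} {H : ℝ → ℝ}
    (hH : ∀ t, μ (Iic t) = ENNReal.ofReal (H t)) (hc : Continuous H) (x : ℝ) :
    μ (Iio x) = ENNReal.ofReal (H x) := by
  have hunion : (⋃ k : ℕ, Iic (x - 1 / (k + 1))) = Iio x := by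
    ext y
    simp only [mem_iUnion, mem_Iic, mem_Iio]
    constructor
    · rintro ⟨k, hk⟩
      have : (0:ℝ) < 1 / (k + 1) := by positivity
      linarith
    · intro hy
      obtain ⟨k, hk⟩ := exists_nat_one_div_lt (show (0:ℝ) < x - y by linarith)
      exact ⟨k, by linarith⟩
  have hmono : Monotone fun k : ℕ => Iic (x - 1 / (k + 1 : ℝ)) := by
    intro a b hab
    apply Iic_subset_Iic.2
    have : (1:ℝ) / (b + 1) ≤ 1 / (a + 1) := by
      apply one_div_le_one_div_of_le (by positivity)
      exact_mod_cast by omega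
    linarith
  have h1 : Tendsto (fun k : ℕ => μ (Iic (x - 1 / (k + 1)))) atTop (𝓝 (μ (Iio x))) := by
    have := tendsto_measure_iUnion_atTop (μ := μ) hmono
    rwa [hunion] at this
  have h2 : Tendsto (fun k : ℕ => μ (Iic (x - 1 / (k + 1)))) atTop
      (𝓝 (ENNReal.ofReal (H x))) := by
    simp only [hH]
    apply (ENNReal.continuous_ofReal.tendsto _).comp
    apply (hc.tendsto x).comp
    have : Tendsto (fun k : ℕ => 1 / ((k:ℝ) + 1)) atTop (𝓝 0) :=
      tendsto_one_div_add_atTop_nhds_zero_nat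
    have := tendsto_const_nhds (x := x) (f := atTop (α := ℕ)) |>.sub this
    simpa using this
  exact tendsto_nhds_unique h1 h2
/-- rewriting rpow of a negative base -/
lemma aux_rpow_neg_base {x : ℝ} (hx : x < 0) (y : ℝ) :
    x ^ y = (-x) ^ y * Real.cos (y * π) := by
  rw [Real.rpow_def_of_neg hx, Real.rpow_def_of_pos (by linarith), Real.log_neg_eq_log]

lemma aux_G_pow {F : ℝ → ℝ} (hFc : Continuous F) {n : ℕ} {α : Fin n → ℝ}
    (hα : ∀ i, 0 < α i) {H : Fin n → ℝ → ℝ}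
    (hH : ∀ i t, F t ^ α i = H i t)
    (h0 : ∀ i t, 0 ≤ H i t) (hmono : ∀ i, Monotone (H i))
    (htop : ∀ i, Tendsto (H i) atTop (𝓝 1)) (i0 : Fin n) :
    ∀ i t, ((F t ^ α i0) ^ (α i0)⁻¹) ^ α i = F t ^ α i := by
  intro i t
  rcases le_or_gt 0 (F t) with hFt | hFt
  · rw [Real.rpow_rpow_inv hFt (hα i0).ne']
  -- F t < 0
  have hm : (0:ℝ) < -F t := by linarith
  set c : Fin n → ℝ := fun j => Real.cos (α j * π) with hc
  have hneg : ∀ (u : ℝ), F u < 0 → ∀ j, H j u = (-F u) ^ α j * c j := fun u hu j => by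
    rw [← hH j u, aux_rpow_neg_base hu]
  have hcnn : ∀ j, 0 ≤ c j := by
    intro j
    have h1 : 0 ≤ (-F t) ^ α j * c j := by rw [← hneg t hFt j]; exact h0 j t
    have h2 : 0 < (-F t) ^ α j := Real.rpow_pos_of_pos hm _
    nlinarith
  -- key dichotomy on existence of a nonnegative value of F above t
  rcases em (∃ u, t ≤ u ∧ 0 ≤ F u) with ⟨u, htu, hFu⟩ | hnoteq
  · -- there is a zero of F in [t, u]; all c j = 0
    have hzero : ∃ v ∈ Icc t u, F v = 0 := by
      have := intermediate_value_Icc htu hFc.continuousOn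
      have h0mem : (0:ℝ) ∈ Icc (F t) (F u) := ⟨hFt.le, hFu⟩
      obtain ⟨v, hv, hveq⟩ := this h0mem
      exact ⟨v, hv, hveq⟩
    obtain ⟨v, hv, hFv⟩ := hzero
    have hcj : ∀ j, c j = 0 := by
      intro j
      have hHv : H j v = 0 := by rw [← hH j v, hFv, Real.zero_rpow (hα j).ne']
      have hle : H j t ≤ 0 := hHv ▸ hmono j hv.1
      have heq : H j t = 0 := le_antisymm hle (h0 j t)
      have hthis := hneg t hFt j
      rw [heq] at hthis
      have h2 : 0 < (-F t) ^ α j := Real.rpow_pos_of_pos hm _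
      rcases mul_eq_zero.1 hthis.symm with h | h
      · exact absurd h h2.ne'
      · exact h
    have hb : F t ^ α i0 = 0 := by
      rw [hH i0 t, hneg t hFt i0, hcj i0, mul_zero]
    rw [hb, Real.zero_rpow (by simp [(hα i0).ne']), Real.zero_rpow (hα i).ne',
      hH i t, hneg t hFt i, hcj i, mul_zero]
  · -- F stays negative on [t, ∞)
    push_neg at hnoteq
    have hFneg : ∀ u, t ≤ u → F u < 0 := fun u hu => hnoteq u hu
    have hc0pos : 0 < c i0 := by
      rcases (hcnn i0).lt_or_eq with h | h
      · exact h
      · -- c i0 = 0 would make H i0 vanish on [t, ∞), contradicting limit 1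
        exfalso
        have hev : ∀ u, t ≤ u → H i0 u = 0 := fun u hu => by
          rw [hneg u (hFneg u hu) i0, ← h, mul_zero]
        have := (htop i0).eventually (eventually_gt_nhds (show (1:ℝ)/2 < 1 by norm_num))
        obtain ⟨u, hu1, hu2⟩ := (this.and (eventually_ge_atTop t)).exists
        rw [hev u hu2] at hu1
        norm_num at hu1
    -- the limit L of -F at infinity
    set a0 := α i0 with ha0
    set L : ℝ := (c i0)⁻¹ ^ a0⁻¹ with hL
    have hLpos : 0 < L := Real.rpow_pos_of_pos (inv_pos.2 hc0pos) _
    have hFlim : Tendsto (fun u => -F u) atTop (𝓝 L) := by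
      have hfun : ∀ᶠ u in atTop, (H i0 u / c i0) ^ a0⁻¹ = -F u := by
        filter_upwards [eventually_ge_atTop t] with u hu
        rw [hneg u (hFneg u hu) i0, mul_div_assoc, div_self hc0pos.ne', mul_one,
          Real.rpow_rpow_inv (by linarith [hFneg u hu]) (hα i0).ne']
      have hcont : Tendsto (fun z => (z / c i0) ^ a0⁻¹) (𝓝 1) (𝓝 L) := by
        have h1 : Tendsto (fun z : ℝ => z / c i0) (𝓝 1) (𝓝 (1 / c i0)) :=
          (continuous_id.div_const _).tendsto' _ _ rfl
        have h2 : ContinuousAt (fun z : ℝ => z ^ a0⁻¹) (1 / c i0) :=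
          Real.continuousAt_rpow_const _ _ (Or.inl (by positivity))
        have := h2.tendsto.comp h1
        simpa [hL, one_div, Function.comp_def] using this
      exact Tendsto.congr' hfun (hcont.comp (htop i0))
    have hci : c i = L ^ (-α i) := by
      have hHlim : Tendsto (H i) atTop (𝓝 (L ^ α i * c i)) := by
        have h2 : ContinuousAt (fun z : ℝ => z ^ α i * c i) L := by
          apply ContinuousAt.mul _ continuousAt_const
          exact Real.continuousAt_rpow_const _ _ (Or.inl hLpos.ne')
        have := h2.tendsto.comp hFlim
        apply Tendsto.congr' _ this
        filter_upwards [eventually_ge_atTop t] with u hu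
        exact (hneg u (hFneg u hu) i).symm
      have h1 : L ^ α i * c i = 1 := tendsto_nhds_unique hHlim (htop i)
      have h2 : L ^ α i ≠ 0 := (Real.rpow_pos_of_pos hLpos _).ne'
      rw [Real.rpow_neg hLpos.le]
      field_simp
      linarith [h1]
    have hcipow : c i = (c i0) ^ (a0⁻¹ * α i) := by
      have hLeq : L = c i0 ^ (-a0⁻¹) := by
        rw [hL, Real.inv_rpow hc0pos.le, ← Real.rpow_neg hc0pos.le]
      rw [hci, hLeq, ← Real.rpow_mul hc0pos.le, neg_mul_neg]
    -- final computation
    have hbase : F t ^ a0 = (-F t) ^ a0 * c i0 := by rw [hH i0 t, hneg t hFt i0]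
    have hb1 : (0:ℝ) ≤ (-F t) ^ a0 := (Real.rpow_pos_of_pos hm _).le
    have key : (((-F t) ^ a0 * c i0) ^ a0⁻¹) ^ α i
        = (-F t) ^ α i * (c i0) ^ (a0⁻¹ * α i) := by
      rw [← Real.rpow_mul (mul_nonneg hb1 hc0pos.le), Real.mul_rpow hb1 hc0pos.le,
        ← Real.rpow_mul hm.le, ← mul_assoc, mul_inv_cancel₀ (hα i0).ne', one_mul]
    rw [hbase, key, hH i t, hneg t hFt i, hcipow]
/-- The family `{F^α : α > 0}` is max-compatible: if `X i` are independent with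
CDFs `F^(α i)` for a continuous CDF `F`, then
`P(X 0 > max of the others) = α 0 / ∑ α i`. -/
theorem pow_family_maxCompatible
    {Ω : Type} [MeasureSpace Ω] [IsProbabilityMeasure (ℙ : Measure Ω)]
    (F : ℝ → ℝ) (hFc : Continuous F)
    (n : ℕ) (hn : 2 ≤ n) (α : Fin n → ℝ) (hα : ∀ i, 0 < α i)
    (X : Fin n → Ω → ℝ) (hXm : ∀ i, Measurable (X i))
    (hindep : iIndepFun X ℙ)
    (hcdf : ∀ i t, (ℙ {ω | X i ω ≤ t}).toReal = F t ^ (α i)) :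
    (ℙ {ω | ∀ j, j ≠ (⟨0, by omega⟩ : Fin n) → X j ω < X (⟨0, by omega⟩ : Fin n) ω}).toReal
      = α ⟨0, by omega⟩ / ∑ i, α i := by
  classical
  set i0 : Fin n := ⟨0, by omega⟩ with hi0
  set H : Fin n → ℝ → ℝ := fun i t => F t ^ α i with hHdef
  have h0 : ∀ i t, 0 ≤ H i t := fun i t => by
    simp only [hHdef]; rw [← hcdf i t]; exact ENNReal.toReal_nonneg
  have hprob : ∀ i (t : ℝ), ℙ {ω | X i ω ≤ t} = ENNReal.ofReal (H i t) := fun i t => by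
    simp only [hHdef]
    rw [← hcdf i t, ENNReal.ofReal_toReal (measure_ne_top _ _)]
  set μ : Fin n → Measure ℝ := fun i => Measure.map (X i) ℙ with hμdef
  have hμprob : ∀ i, IsProbabilityMeasure (μ i) := fun i =>
    Measure.isProbabilityMeasure_map (hXm i).aemeasurable
  have hμIic : ∀ i t, μ i (Iic t) = ENNReal.ofReal (H i t) := fun i t => by
    rw [hμdef]; rw [Measure.map_apply (hXm i) measurableSet_Iic]; exact hprob i t
  have hmono : ∀ i, Monotone (H i) := fun i => aux_cdf_mono (hμIic i) (h0 i)
  have htop : ∀ i, Tendsto (H i) atTop (𝓝 1) := fun i =>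
    haveI := hμprob i
    aux_cdf_tendsto_atTop (hμIic i) (h0 i)
  have hHc : ∀ i, Continuous (H i) := fun i => (aux_rpow_cont (hα i).le).comp hFc
  set G : ℝ → ℝ := fun t => (F t ^ α i0) ^ (α i0)⁻¹ with hGdef
  have hGpow : ∀ i t, G t ^ α i = F t ^ α i :=
    aux_G_pow hFc hα (fun i t => rfl) h0 hmono htop i0
  have hG0 : ∀ t, 0 ≤ G t := fun t => Real.rpow_nonneg (h0 i0 t) _
  -- the max over the other indices
  set T : Finset (Fin n) := Finset.univ.erase i0 with hT
  have hTne : T.Nonempty := ⟨⟨1, by omega⟩, Finset.mem_erase.2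
    ⟨by simp [hi0, Fin.ext_iff], Finset.mem_univ _⟩⟩
  set M : Ω → ℝ := fun ω => T.sup' hTne fun j => X j ω with hMdef
  have hM : Measurable M := by
    have h1 := Finset.measurable_sup' hTne (fun j (_ : j ∈ T) => hXm j)
    have h2 : (T.sup' hTne X) = M := by
      funext ω; rw [hMdef, Finset.sup'_apply]
    rwa [h2] at h1
  set β : ℝ := ∑ j ∈ T, α j with hβ
  have hβpos : 0 < β := Finset.sum_pos (fun j _ => hα j) hTne
  set γ : ℝ := β / α i0 with hγ
  have hγpos : 0 < γ := div_pos hβpos (hα i0)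
  -- event rewrite
  have hevent : {ω | ∀ j, j ≠ i0 → X j ω < X i0 ω}
      = (fun ω => (X i0 ω, M ω)) ⁻¹' {p : ℝ × ℝ | p.2 < p.1} := by
    ext ω
    simp only [mem_setOf_eq, mem_preimage, hMdef, Finset.sup'_lt_iff, hT, Finset.mem_erase,
      Finset.mem_univ, and_true]
  -- independence of X i0 and M
  have hindepXM : IndepFun (X i0) M ℙ := by
    have hdisj : Disjoint ({i0} : Finset (Fin n)) T := by
      simp [hT, Finset.disjoint_left]
    have h1 := hindep.indepFun_finset {i0} T hdisj hXm
    have hφ : Measurable fun v : {x // x ∈ ({i0} : Finset (Fin n))} → ℝ =>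
        v ⟨i0, Finset.mem_singleton_self i0⟩ := measurable_pi_apply _
    have hψ : Measurable fun v : {x // x ∈ T} → ℝ =>
        T.attach.sup' hTne.attach fun j => v j := by
      have hψ0 : Measurable (T.attach.sup' hTne.attach
          fun (j : {x // x ∈ T}) (v : {x // x ∈ T} → ℝ) => v j) :=
        Finset.measurable_sup' _ fun j _ => measurable_pi_apply j
      have heq : (T.attach.sup' hTne.attach fun j (v : {x // x ∈ T} → ℝ) => v j)
          = fun v : {x // x ∈ T} → ℝ => T.attach.sup' hTne.attach fun j => v j := by
        funext v; rw [Finset.sup'_apply]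
      rwa [heq] at hψ0
    have h2 := h1.comp hφ hψ
    have he1 : (fun v : {x // x ∈ ({i0} : Finset (Fin n))} → ℝ =>
        v ⟨i0, Finset.mem_singleton_self i0⟩) ∘ (fun a (i : {x // x ∈ ({i0} : Finset (Fin n))}) => X i a)
        = X i0 := rfl
    have he2 : (fun v : {x // x ∈ T} → ℝ =>
        T.attach.sup' hTne.attach fun j => v j) ∘ (fun a (i : {x // x ∈ T}) => X i a)
        = M := by
      funext a
      simp only [Function.comp_apply, hMdef]
      apply le_antisymm
      · exact Finset.sup'_le _ _ fun j _ => Finset.le_sup' (f := fun j => X j a) j.2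
      · exact Finset.sup'_le _ _ fun j hj =>
          Finset.le_sup' (f := fun x : {x // x ∈ T} => X (↑x) a)
            (Finset.mem_attach _ ⟨j, hj⟩)
    rwa [he1, he2] at h2
  haveI : IsProbabilityMeasure (Measure.map M ℙ) := Measure.isProbabilityMeasure_map hM.aemeasurable
  haveI := hμprob i0
  have hmap : Measure.map (fun ω => (X i0 ω, M ω)) ℙ = (μ i0).prod (Measure.map M ℙ) :=
    (indepFun_iff_map_prod_eq_prod_map_map (hXm i0).aemeasurable hM.aemeasurable).1 hindepXM
  have hsetm : MeasurableSet {p : ℝ × ℝ | p.2 < p.1} := measurableSet_lt measurable_snd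
    measurable_fst
  -- law of M below a point
  have hν : ∀ x : ℝ, Measure.map M ℙ (Iio x) = ENNReal.ofReal (H i0 x ^ γ) := by
    intro x
    rw [Measure.map_apply hM measurableSet_Iio]
    have hMpre : M ⁻¹' Iio x = ⋂ j ∈ T, X j ⁻¹' Iio x := by
      ext ω
      simp [hMdef, Finset.sup'_lt_iff, mem_iInter]
    rw [hMpre, hindep.measure_inter_preimage_eq_mul T (sets := fun _ => Iio x)
      (fun _ _ => measurableSet_Iio)]
    have hterm : ∀ j ∈ T, ℙ (X j ⁻¹' Iio x) = ENNReal.ofReal (H j x) := by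
      intro j _
      have : ℙ (X j ⁻¹' Iio x) = μ j (Iio x) := by
        rw [hμdef]; rw [Measure.map_apply (hXm j) measurableSet_Iio]
      rw [this, aux_Iio (hμIic j) (hHc j) x]
    rw [Finset.prod_congr rfl hterm, ← ENNReal.ofReal_prod_of_nonneg (fun j _ => h0 j x)]
    congr 1
    have h1 : ∀ j ∈ T, H j x = G x ^ α j := fun j _ => (hGpow j x).symm
    rw [Finset.prod_congr rfl h1, ← Real.rpow_sum_of_nonneg (hG0 x) (fun j _ => (hα j).le),
      ← hβ]
    have h2 : G x ^ β = (H i0 x) ^ γ := by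
      have h3 : H i0 x = G x ^ α i0 := (hGpow i0 x).symm
      rw [h3, ← Real.rpow_mul (hG0 x), hγ, mul_div_cancel₀ β (hα i0).ne']
    rw [h2]
  -- main computation
  have hmain : ℙ {ω | ∀ j, j ≠ i0 → X j ω < X i0 ω} = ENNReal.ofReal (1 / (γ + 1)) := by
    rw [hevent, ← Measure.map_apply ((hXm i0).prodMk hM) hsetm, hmap,
      Measure.prod_apply hsetm]
    have hfib : ∀ x : ℝ, (Prod.mk x ⁻¹' {p : ℝ × ℝ | p.2 < p.1}) = Iio x := by
      intro x; ext y; simp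
    calc ∫⁻ x, Measure.map M ℙ (Prod.mk x ⁻¹' {p : ℝ × ℝ | p.2 < p.1}) ∂(μ i0)
        = ∫⁻ x, ENNReal.ofReal (H i0 x ^ γ) ∂(μ i0) := by
          congr 1; funext x; rw [hfib x, hν x]
      _ = ENNReal.ofReal (1 / (γ + 1)) :=
          aux_lintegral_pow (hμIic i0) (hHc i0) (h0 i0) hγpos
  rw [hmain, ENNReal.toReal_ofReal (by positivity)]
  have hsum : ∑ i, α i = α i0 + β := by
    rw [hβ, hT, Finset.add_sum_erase Finset.univ α (Finset.mem_univ i0)]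
  rw [hsum, hγ]
  have ha0 : α i0 ≠ 0 := (hα i0).ne'
  field_simp
  ring
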